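/- Let X ⊂ ℝⁿ be a poised interpolation set and for a quadratic base Q let M_Q(f) denote the (unique) least Frobenius norm updating model of f on X based on Q. Then for any constants ν₁, ν₂ ∈ ℝ and any f, M_{ν₁Q_α + ν₂}(f) = ν₁·M_{Q_α}(f) + (1 − ν₁)·M₀(f), where M₀(f) is the least Frobenius norm interpolant of f on X (base zero). -/
import Mathlib


structure Quad (n : ℕ) where
  c : ℝ
  g : Fin n → ℝ
  A : Matrix (Fin n) (Fin n) ℝ
  symm : A.IsSymm

namespace Quad
variable {n : ℕ}

noncomputable def eval (Q : Quad n) (x : Fin n → ℝ) : ℝ :=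
  Q.c + (∑ i, Q.g i * x i) + (1 / 2) * ∑ i, ∑ j, x i * Q.A i j * x j

def add (P Q : Quad n) : Quad n :=
  ⟨P.c + Q.c, P.g + Q.g, P.A + Q.A, P.symm.add Q.symm⟩

def sub (P Q : Quad n) : Quad n :=
  ⟨P.c - Q.c, P.g - Q.g, P.A - Q.A, P.symm.sub Q.symm⟩

def smul (r : ℝ) (Q : Quad n) : Quad n :=
  ⟨r * Q.c, r • Q.g, r • Q.A, by
    simp only [Matrix.IsSymm, Matrix.transpose_smul, Q.symm.eq]⟩

def addConst (Q : Quad n) (r : ℝ) : Quad n := ⟨Q.c + r, Q.g, Q.A, Q.symm⟩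

protected def zero : Quad n := ⟨0, 0, 0, by simp [Matrix.IsSymm]⟩

end Quad

noncomputable def frobSq {n : ℕ} (M : Matrix (Fin n) (Fin n) ℝ) : ℝ := ∑ i, ∑ j, (M i j) ^ 2

def Interpolates {n m : ℕ} (Q : Quad n) (h : (Fin n → ℝ) → ℝ)
    (x : Fin m → (Fin n → ℝ)) : Prop :=
  ∀ i, Q.eval (x i) = h (x i)

def IsLFNModel {n m : ℕ} (B : Quad n) (h : (Fin n → ℝ) → ℝ)
    (x : Fin m → (Fin n → ℝ)) (Q : Quad n) : Prop :=
  Interpolates Q h x ∧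
    ∀ Q' : Quad n, Interpolates Q' h x → frobSq (Q.A - B.A) ≤ frobSq (Q'.A - B.A)

/-! ### Auxiliary lemmas -/

namespace Quad
variable {n : ℕ}

lemma eval_add' (P Q : Quad n) (y : Fin n → ℝ) :
    (P.add Q).eval y = P.eval y + Q.eval y := by
  have h1 : ∀ i, (P.g + Q.g) i * y i = P.g i * y i + Q.g i * y i := by
    intro i; simp [add_mul]
  have h2 : ∀ i j, y i * (P.A + Q.A) i j * y j
      = y i * P.A i j * y j + y i * Q.A i j * y j := by
    intro i j; simp [Matrix.add_apply]; ring
  simp only [eval, add, h1, h2, Finset.sum_add_distrib]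
  ring

lemma eval_smul' (r : ℝ) (Q : Quad n) (y : Fin n → ℝ) :
    (Q.smul r).eval y = r * Q.eval y := by
  have h1 : ∀ i, (r • Q.g) i * y i = r * (Q.g i * y i) := by
    intro i; simp [smul_eq_mul]; ring
  have h2 : ∀ i j, y i * (r • Q.A) i j * y j = r * (y i * Q.A i j * y j) := by
    intro i j; simp [Matrix.smul_apply, smul_eq_mul]; ring
  simp only [eval, smul, h1, h2, ← Finset.mul_sum]
  ring

lemma eval_sub' (P Q : Quad n) (y : Fin n → ℝ) :
    (P.sub Q).eval y = P.eval y - Q.eval y := by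
  have h1 : ∀ i, (P.g - Q.g) i * y i = P.g i * y i - Q.g i * y i := by
    intro i; simp [sub_mul]
  have h2 : ∀ i j, y i * (P.A - Q.A) i j * y j
      = y i * P.A i j * y j - y i * Q.A i j * y j := by
    intro i j; simp [Matrix.sub_apply]; ring
  simp only [eval, sub, h1, h2, Finset.sum_sub_distrib]
  ring

end Quad

noncomputable def finner {n : ℕ} (M N : Matrix (Fin n) (Fin n) ℝ) : ℝ :=
  ∑ i, ∑ j, M i j * N i j

lemma frobSq_eq_finner {n : ℕ} (M : Matrix (Fin n) (Fin n) ℝ) : frobSq M = finner M M := by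
  simp [frobSq, finner, sq]

lemma frobSq_nonneg {n : ℕ} (M : Matrix (Fin n) (Fin n) ℝ) : 0 ≤ frobSq M := by
  apply Finset.sum_nonneg; intro i _
  apply Finset.sum_nonneg; intro j _
  positivity

lemma frob_expand {n : ℕ} (M N : Matrix (Fin n) (Fin n) ℝ) :
    frobSq (M + N) = frobSq M + 2 * finner M N + frobSq N := by
  have h : ∀ i j : Fin n, (M i j + N i j) ^ 2
      = M i j ^ 2 + (2 * (M i j * N i j) + N i j ^ 2) := by
    intros; ring
  simp only [frobSq, finner, Matrix.add_apply, h, Finset.sum_add_distrib, Finset.mul_sum]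
  ring

lemma finner_smul_right {n : ℕ} (r : ℝ) (M N : Matrix (Fin n) (Fin n) ℝ) :
    finner M (r • N) = r * finner M N := by
  simp only [finner, Matrix.smul_apply, smul_eq_mul, Finset.mul_sum]
  congr 1; funext; congr 1; funext; ring

lemma finner_add_left {n : ℕ} (M N P : Matrix (Fin n) (Fin n) ℝ) :
    finner (M + N) P = finner M P + finner N P := by
  simp only [finner, Matrix.add_apply, add_mul, Finset.sum_add_distrib]

lemma finner_smul_left {n : ℕ} (r : ℝ) (M N : Matrix (Fin n) (Fin n) ℝ) :
    finner (r • M) N = r * finner M N := by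
  simp only [finner, Matrix.smul_apply, smul_eq_mul, Finset.mul_sum, mul_assoc]

lemma frobSq_smul {n : ℕ} (r : ℝ) (M : Matrix (Fin n) (Fin n) ℝ) :
    frobSq (r • M) = r ^ 2 * frobSq M := by
  simp only [frobSq_eq_finner, finner_smul_left, finner_smul_right, sq]
  ring

/-- Orthogonality of the optimal residual to Hessians of quadratics
interpolating zero. -/
lemma lfn_orth {n m : ℕ} {B Qm : Quad n} {f : (Fin n → ℝ) → ℝ}
    {x : Fin m → (Fin n → ℝ)} (hQm : IsLFNModel B f x Qm)
    {Q0 : Quad n} (hQ0 : ∀ i, Q0.eval (x i) = 0) :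
    finner (Qm.A - B.A) Q0.A = 0 := by
  set u := Qm.A - B.A with hu
  set v := Q0.A with hv
  set c := finner u v with hc
  set b := frobSq v with hb
  have hbnn : 0 ≤ b := frobSq_nonneg v
  have key : ∀ t : ℝ, 0 ≤ 2 * t * c + t ^ 2 * b := by
    intro t
    have hint : Interpolates (Qm.add (Q0.smul t)) f x := by
      intro i
      rw [Quad.eval_add', Quad.eval_smul', hQ0 i, hQm.1 i]
      ring
    have h := hQm.2 _ hint
    have hA : (Qm.add (Q0.smul t)).A - B.A = u + t • v := by
      show Qm.A + t • Q0.A - B.A = Qm.A - B.A + t • Q0.A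
      abel
    rw [hA, frob_expand, finner_smul_right, frobSq_smul] at h
    nlinarith [h]
  rcases eq_or_lt_of_le hbnn with hb0 | hbpos
  · have h1 := key (-c)
    rw [← hb0] at h1
    nlinarith [h1]
  · have h1 := key (-c / b)
    have hb' : b ≠ 0 := ne_of_gt hbpos
    have heq : 2 * (-c / b) * c + (-c / b) ^ 2 * b = -(c ^ 2) / b := by
      field_simp; ring
    rw [heq] at h1
    have h2 : 0 ≤ -(c ^ 2) := by
      have := mul_nonneg h1 hbnn
      rwa [div_mul_cancel₀ _ hb'] at this
    have h3 : c ^ 2 = 0 := le_antisymm (by linarith) (sq_nonneg c)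
    exact pow_eq_zero_iff (by norm_num) |>.mp h3

/-- Theorem `anotherview`: for constants `ν₁, ν₂`, the least Frobenius norm
updating model of `f` based on `ν₁Q_α + ν₂` satisfies
`M_{ν₁Q_α+ν₂}(f) = ν₁ M_{Q_α}(f) + (1 − ν₁) M₀(f)`,
where `M₀(f)` is the least Frobenius norm interpolant of `f` (base zero). -/
theorem lfn_updating_model_scaled_base
    {n m : ℕ} (x : Fin m → (Fin n → ℝ)) (Qα : Quad n) (ν₁ ν₂ : ℝ)
    (f : (Fin n → ℝ) → ℝ)
    (Qβ Qφ Qγ : Quad n)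
    (hβ : IsLFNModel Qα f x Qβ)
    (hφ : IsLFNModel Quad.zero f x Qφ)
    (hγ : IsLFNModel ((Qα.smul ν₁).addConst ν₂) f x Qγ)
    (hγuniq : ∀ Q : Quad n, IsLFNModel ((Qα.smul ν₁).addConst ν₂) f x Q → Q = Qγ) :
    Qγ = (Qβ.smul ν₁).add (Qφ.smul (1 - ν₁)) := by
  set Q : Quad n := (Qβ.smul ν₁).add (Qφ.smul (1 - ν₁)) with hQ
  refine (hγuniq Q ?_).symm
  have hBA : ((Qα.smul ν₁).addConst ν₂).A = ν₁ • Qα.A := rfl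
  have hQA : Q.A = ν₁ • Qβ.A + (1 - ν₁) • Qφ.A := rfl
  have hQint : Interpolates Q f x := by
    intro i
    rw [hQ]
    rw [Quad.eval_add', Quad.eval_smul', Quad.eval_smul', hβ.1 i, hφ.1 i]
    ring
  refine ⟨hQint, ?_⟩
  intro Q' hQ'
  set v : Quad n := Q'.sub Q with hvdef
  have hv0 : ∀ i, v.eval (x i) = 0 := by
    intro i
    rw [hvdef, Quad.eval_sub', hQ' i, hQint i, sub_self]
  have hdecomp : Q'.A - ((Qα.smul ν₁).addConst ν₂).A
      = (Q.A - ((Qα.smul ν₁).addConst ν₂).A) + v.A := by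
    show Q'.A - ((Qα.smul ν₁).addConst ν₂).A
      = (Q.A - ((Qα.smul ν₁).addConst ν₂).A) + (Q'.A - Q.A)
    abel
  have horth : finner (Q.A - ((Qα.smul ν₁).addConst ν₂).A) v.A = 0 := by
    have hsplit : Q.A - ((Qα.smul ν₁).addConst ν₂).A
        = ν₁ • (Qβ.A - Qα.A) + (1 - ν₁) • (Qφ.A - Quad.zero.A) := by
      rw [hQA, hBA]
      show ν₁ • Qβ.A + (1 - ν₁) • Qφ.A - ν₁ • Qα.A
        = ν₁ • (Qβ.A - Qα.A) + (1 - ν₁) • (Qφ.A - (0 : Matrix (Fin n) (Fin n) ℝ))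
      rw [smul_sub, smul_sub, smul_zero, sub_zero]
      abel
    rw [hsplit, finner_add_left, finner_smul_left, finner_smul_left,
      lfn_orth hβ hv0, lfn_orth hφ hv0]
    ring
  rw [hdecomp, frob_expand, horth]
  have := frobSq_nonneg v.A
  linarith
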